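/- The Takagi function T(x) = Σ_{n=0}^∞ 2^{-n} dist(2ⁿx, ℤ) is of monotonic type on no interval: for every open subinterval J of (0,1), sup_{x,y ∈ J, x>y} (T(x)-T(y))/(x-y) = +∞ and inf_{x,y ∈ J, x>y} (T(x)-T(y))/(x-y) = -∞. -/

import Mathlib

open Finset

/-- The Takagi function `T(x) = Σ 2^{-n} dist(2ⁿ x, ℤ)`. -/
noncomputable def takagi (x : ℝ) : ℝ :=
  ∑' n : ℕ, (2:ℝ)⁻¹ ^ n * |2 ^ n * x - round (2 ^ n * x)|

/-- distance to nearest integer -/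
noncomputable def dz (x : ℝ) : ℝ := |x - round x|

lemma dz_nonneg (x : ℝ) : 0 ≤ dz x := abs_nonneg _

lemma dz_int (k : ℤ) : dz (k : ℝ) = 0 := by simp [dz]

lemma dz_lip (x y : ℝ) : |dz x - dz y| ≤ |x - y| := by
  have h1 : dz x ≤ |x - y| + dz y := by
    calc dz x ≤ |x - (round y : ℤ)| := round_le x _
    _ ≤ |x - y| + |y - round y| := by
        have := abs_sub_abs_le_abs_sub (x - round y) (y - round y)
        have h := abs_add_le (x - y) (y - (round y:ℤ)); 
        calc |x - (round y:ℤ)| = |(x - y) + (y - (round y:ℤ))| := by ring_nf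
        _ ≤ |x - y| + |y - (round y:ℤ)| := abs_add_le _ _
    _ = |x - y| + dz y := rfl
  have h2 : dz y ≤ |x - y| + dz x := by
    calc dz y ≤ |y - (round x : ℤ)| := round_le y _
    _ = |(y - x) + (x - (round x:ℤ))| := by ring_nf
    _ ≤ |y - x| + dz x := abs_add_le _ _
    _ = |x - y| + dz x := by rw [abs_sub_comm]
  rw [abs_sub_le_iff]; constructor <;> linarith

lemma dz_add_eps (k : ℤ) (ε : ℝ) (h0 : 0 ≤ ε) (h1 : ε ≤ 1/2) : dz ((k : ℝ) + ε) = ε := by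
  unfold dz
  rw [round_intCast_add]
  rcases lt_or_eq_of_le h1 with h | h
  · have : round ε = 0 := round_eq_zero_iff.mpr ⟨by linarith, by simpa using h⟩
    rw [this]
    push_cast
    rw [show (k:ℝ) + ε - (k + 0) = ε by ring, abs_of_nonneg h0]
  · have : round ε = 1 := by
      rw [round_eq, h]; norm_num
    rw [this]
    push_cast
    rw [show (k:ℝ) + ε - (k + 1) = ε - 1 by ring, abs_of_nonpos (by linarith), h]
    norm_num

lemma dz_sub_eps (k : ℤ) (ε : ℝ) (h0 : 0 ≤ ε) (h1 : ε ≤ 1/2) : dz ((k : ℝ) - ε) = ε := by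
  unfold dz
  rw [show (k:ℝ) - ε = (k:ℝ) + (-ε) by ring, round_intCast_add]
  have : round (-ε) = 0 := round_eq_zero_iff.mpr ⟨by linarith, by simp; linarith⟩
  rw [this]
  push_cast
  rw [show (k:ℝ) + -ε - (k + 0) = -ε by ring, abs_neg, abs_of_nonneg h0]

/-- the summand -/
noncomputable def tg (n : ℕ) (x : ℝ) : ℝ := (2:ℝ)⁻¹ ^ n * dz (2 ^ n * x)

lemma tg_summable (x : ℝ) : Summable (fun n => tg n x) := by
  apply Summable.of_nonneg_of_le (fun n => mul_nonneg (by positivity) (dz_nonneg _))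
    (fun n => ?_) (Summable.mul_right (1/2) (summable_geometric_two))
  show (2:ℝ)⁻¹ ^ n * dz (2 ^ n * x) ≤ (1/2)^n * (1/2)
  have h : dz ((2:ℝ) ^ n * x) ≤ 1/2 := abs_sub_round _
  calc (2:ℝ)⁻¹ ^ n * dz (2 ^ n * x) ≤ (2:ℝ)⁻¹ ^ n * (1/2) :=
        mul_le_mul_of_nonneg_left h (by positivity)
  _ = (1/2)^n * (1/2) := by norm_num

lemma takagi_eq_tsum (x : ℝ) : takagi x = ∑' n, tg n x := rfl

lemma two_ne : (2:ℝ) ≠ 0 := two_ne_zero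

lemma takagi_eq_sum (m : ℕ) (x : ℝ) (h : ∃ k : ℤ, (2:ℝ) ^ m * x = k) :
    takagi x = ∑ n ∈ range m, tg n x := by
  rw [takagi_eq_tsum]
  apply tsum_eq_sum
  intro n hn
  rw [mem_range, not_lt] at hn
  obtain ⟨k, hk⟩ := h
  have : (2:ℝ) ^ n * x = ((2^(n-m) * k : ℤ) : ℝ) := by
    push_cast
    rw [← pow_sub_mul_pow (2:ℝ) hn, mul_assoc, hk]
  unfold tg
  rw [this, dz_int, mul_zero]

lemma pow_mul_div (j : ℤ) (N n : ℕ) (hn : N ≤ n) :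
    (2:ℝ) ^ n * ((j:ℝ) / 2 ^ N) = ((j * 2 ^ (n - N) : ℤ) : ℝ) := by
  push_cast
  rw [← pow_sub_mul_pow (2:ℝ) hn]
  field_simp

lemma delta_le (n m : ℕ) (h : n < m) : (2:ℝ) ^ n * ((2:ℝ) ^ m)⁻¹ ≤ 1/2 := by
  have h2 : (2:ℝ)^n * 2 ≤ 2^m := by
    rw [← pow_succ]; exact pow_le_pow_right₀ one_le_two h
  have hi : (0:ℝ) < ((2:ℝ)^m)⁻¹ := by positivity
  have hid : (2:ℝ)^m * ((2:ℝ)^m)⁻¹ = 1 := mul_inv_cancel₀ (by positivity)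
  nlinarith [mul_le_mul_of_nonneg_right h2 hi.le]

lemma inv_pow_mul_pow (n : ℕ) : (2:ℝ)⁻¹ ^ n * (2:ℝ) ^ n = 1 := by
  rw [← mul_pow]; norm_num

lemma key_pos (N m : ℕ) (j : ℤ) (h : N < m) :
    ((m:ℝ) - 2*N) * ((2:ℝ)^m)⁻¹ ≤
      takagi ((j:ℝ)/2^N + ((2:ℝ)^m)⁻¹) - takagi ((j:ℝ)/2^N) := by
  set ε : ℝ := ((2:ℝ)^m)⁻¹ with hεdef
  set a : ℝ := (j:ℝ)/2^N with hadef
  set x : ℝ := a + ε with hxdef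
  have hε : 0 < ε := by positivity
  have hax : ∀ n, (2:ℝ)^n * x = (2:ℝ)^n * a + (2:ℝ)^n * ε := fun n => by rw [hxdef]; ring
  have hxZ : ∃ k : ℤ, (2:ℝ) ^ m * x = k := by
    refine ⟨j * 2 ^ (m - N) + 1, ?_⟩
    rw [hax, pow_mul_div j N m h.le]
    push_cast
    rw [hεdef, mul_inv_cancel₀ (by positivity)]
  have haZ : ∃ k : ℤ, (2:ℝ) ^ m * a = k :=
    ⟨j * 2 ^ (m - N), pow_mul_div j N m h.le⟩
  have hsum : takagi x - takagi a = ∑ n ∈ range m, (tg n x - tg n a) := by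
    rw [takagi_eq_sum m x hxZ, takagi_eq_sum m a haZ, Finset.sum_sub_distrib]
  have hsplit : ∑ n ∈ range m, (tg n x - tg n a)
      = ∑ n ∈ range N, (tg n x - tg n a) + ∑ n ∈ Ico N m, (tg n x - tg n a) := by
    rw [range_eq_Ico, range_eq_Ico]
    exact (Finset.sum_Ico_consecutive (fun n => tg n x - tg n a) (Nat.zero_le N) h.le).symm
  have hterm : ∀ n ∈ Ico N m, tg n x - tg n a = ε := by
    intro n hn
    rw [mem_Ico] at hn
    have h2a : (2:ℝ)^n * a = ((j * 2 ^ (n - N) : ℤ) : ℝ) := pow_mul_div j N n hn.1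
    have htga : tg n a = 0 := by rw [tg, h2a, dz_int, mul_zero]
    have htgx : tg n x = ε := by
      rw [tg, hax, h2a]
      rw [dz_add_eps _ _ (by positivity) (delta_le n m hn.2)]
      rw [← mul_assoc, inv_pow_mul_pow, one_mul]
    rw [htga, htgx, sub_zero]
  have h2 : ∑ n ∈ Ico N m, (tg n x - tg n a) = ((m:ℝ) - N) * ε := by
    rw [Finset.sum_congr rfl hterm, Finset.sum_const, Nat.card_Ico, nsmul_eq_mul]
    rw [Nat.cast_sub h.le]
  have h1 : ∀ n ∈ range N, -ε ≤ tg n x - tg n a := by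
    intro n hn
    rw [mem_range] at hn
    have hlip := dz_lip ((2:ℝ)^n * x) ((2:ℝ)^n * a)
    have hd : |(2:ℝ)^n * x - (2:ℝ)^n * a| = (2:ℝ)^n * ε := by
      rw [hax, add_sub_cancel_left, abs_of_nonneg (by positivity)]
    rw [hd] at hlip
    have habs : |tg n x - tg n a| ≤ ε := by
      rw [tg, tg, ← mul_sub, abs_mul, abs_of_nonneg (by positivity : (0:ℝ) ≤ (2:ℝ)⁻¹^n)]
      calc (2:ℝ)⁻¹ ^ n * |dz (2^n * x) - dz (2^n * a)| ≤ (2:ℝ)⁻¹^n * ((2:ℝ)^n * ε) :=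
            mul_le_mul_of_nonneg_left hlip (by positivity)
        _ = ε := by rw [← mul_assoc, inv_pow_mul_pow, one_mul]
    have := abs_le.mp habs
    linarith [this.1]
  have hlow : -(N:ℝ) * ε ≤ ∑ n ∈ range N, (tg n x - tg n a) := by
    have := Finset.card_nsmul_le_sum (range N) (fun n => tg n x - tg n a) (-ε) h1
    simpa [nsmul_eq_mul, neg_mul, mul_comm] using this
  rw [hsum, hsplit, h2]
  have : ((m:ℝ) - 2*N) * ε = -(N:ℝ)*ε + ((m:ℝ) - N) * ε := by ring
  linarith

lemma key_neg (N m : ℕ) (j : ℤ) (h : N < m) :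
    takagi ((j:ℝ)/2^N) - takagi ((j:ℝ)/2^N - ((2:ℝ)^m)⁻¹) ≤
      (2*(N:ℝ) - m) * ((2:ℝ)^m)⁻¹ := by
  set ε : ℝ := ((2:ℝ)^m)⁻¹ with hεdef
  set a : ℝ := (j:ℝ)/2^N with hadef
  set y : ℝ := a - ε with hydef
  have hε : 0 < ε := by positivity
  have hay : ∀ n, (2:ℝ)^n * y = (2:ℝ)^n * a - (2:ℝ)^n * ε := fun n => by rw [hydef]; ring
  have hyZ : ∃ k : ℤ, (2:ℝ) ^ m * y = k := by
    refine ⟨j * 2 ^ (m - N) - 1, ?_⟩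
    rw [hay, pow_mul_div j N m h.le]
    push_cast
    rw [hεdef, mul_inv_cancel₀ (by positivity)]
  have haZ : ∃ k : ℤ, (2:ℝ) ^ m * a = k :=
    ⟨j * 2 ^ (m - N), pow_mul_div j N m h.le⟩
  have hsum : takagi a - takagi y = ∑ n ∈ range m, (tg n a - tg n y) := by
    rw [takagi_eq_sum m a haZ, takagi_eq_sum m y hyZ, Finset.sum_sub_distrib]
  have hsplit : ∑ n ∈ range m, (tg n a - tg n y)
      = ∑ n ∈ range N, (tg n a - tg n y) + ∑ n ∈ Ico N m, (tg n a - tg n y) := by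
    rw [range_eq_Ico, range_eq_Ico]
    exact (Finset.sum_Ico_consecutive (fun n => tg n a - tg n y) (Nat.zero_le N) h.le).symm
  have hterm : ∀ n ∈ Ico N m, tg n a - tg n y = -ε := by
    intro n hn
    rw [mem_Ico] at hn
    have h2a : (2:ℝ)^n * a = ((j * 2 ^ (n - N) : ℤ) : ℝ) := pow_mul_div j N n hn.1
    have htga : tg n a = 0 := by rw [tg, h2a, dz_int, mul_zero]
    have htgy : tg n y = ε := by
      rw [tg, hay, h2a]
      rw [dz_sub_eps _ _ (by positivity) (delta_le n m hn.2)]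
      rw [← mul_assoc, inv_pow_mul_pow, one_mul]
    rw [htga, htgy, zero_sub]
  have h2 : ∑ n ∈ Ico N m, (tg n a - tg n y) = -(((m:ℝ) - N) * ε) := by
    rw [Finset.sum_congr rfl hterm, Finset.sum_const, Nat.card_Ico, nsmul_eq_mul]
    rw [Nat.cast_sub h.le]
    ring
  have h1 : ∀ n ∈ range N, tg n a - tg n y ≤ ε := by
    intro n hn
    rw [mem_range] at hn
    have hlip := dz_lip ((2:ℝ)^n * a) ((2:ℝ)^n * y)
    have hd : |(2:ℝ)^n * a - (2:ℝ)^n * y| = (2:ℝ)^n * ε := by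
      rw [hay, sub_sub_cancel, abs_of_nonneg (by positivity)]
    rw [hd] at hlip
    have habs : |tg n a - tg n y| ≤ ε := by
      rw [tg, tg, ← mul_sub, abs_mul, abs_of_nonneg (by positivity : (0:ℝ) ≤ (2:ℝ)⁻¹^n)]
      calc (2:ℝ)⁻¹ ^ n * |dz (2^n * a) - dz (2^n * y)| ≤ (2:ℝ)⁻¹^n * ((2:ℝ)^n * ε) :=
            mul_le_mul_of_nonneg_left hlip (by positivity)
        _ = ε := by rw [← mul_assoc, inv_pow_mul_pow, one_mul]
    exact (abs_le.mp habs).2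
  have hup : ∑ n ∈ range N, (tg n a - tg n y) ≤ (N:ℝ) * ε := by
    have := Finset.sum_le_card_nsmul (range N) (fun n => tg n a - tg n y) ε h1
    simpa [nsmul_eq_mul] using this
  rw [hsum, hsplit, h2]
  have : (2*(N:ℝ) - m) * ε = (N:ℝ)*ε + -(((m:ℝ) - N) * ε) := by ring
  linarith

/-- The Takagi function is of monotonic type on no interval: on every open
subinterval of `(0,1)` the difference quotients are unbounded above and below. -/
theorem takagi_MTNI :
    ∀ u v : ℝ, 0 ≤ u → u < v → v ≤ 1 →
      (∀ M : ℝ, ∃ x ∈ Set.Ioo u v, ∃ y ∈ Set.Ioo u v, y < x ∧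
        M < (takagi x - takagi y) / (x - y)) ∧
      (∀ M : ℝ, ∃ x ∈ Set.Ioo u v, ∃ y ∈ Set.Ioo u v, y < x ∧
        (takagi x - takagi y) / (x - y) < M) := by
  intro u v _ huv _
  obtain ⟨N, hN⟩ := pow_unbounded_of_one_lt ((4:ℝ)/(v-u)) one_lt_two
  have hvu : (0:ℝ) < v - u := by linarith
  have hpN : (0:ℝ) < (2:ℝ)^N := by positivity
  have hiN : (0:ℝ) < ((2:ℝ)^N)⁻¹ := by positivity
  have hidN : (2:ℝ)^N * ((2:ℝ)^N)⁻¹ = 1 := mul_inv_cancel₀ (by positivity)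
  have hN4 : 4 * ((2:ℝ)^N)⁻¹ < v - u := by
    rw [div_lt_iff₀ hvu] at hN
    nlinarith [mul_lt_mul_of_pos_right hN hiN]
  set j : ℤ := ⌊u * 2^N⌋ + 2 with hjdef
  set a : ℝ := (j:ℝ)/2^N with hadef
  have hfl : u * 2^N < (⌊u * 2^N⌋ : ℝ) + 1 := Int.lt_floor_add_one _
  have hfl2 : ((⌊u * 2^N⌋ : ℤ) : ℝ) ≤ u * 2^N := Int.floor_le _
  have ha_lb : u + ((2:ℝ)^N)⁻¹ < a := by
    rw [hadef, hjdef, lt_div_iff₀ hpN]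
    push_cast
    nlinarith
  have ha_ub : a ≤ u + 2 * ((2:ℝ)^N)⁻¹ := by
    rw [hadef, hjdef, div_le_iff₀ hpN]
    push_cast
    nlinarith
  -- generic m setup
  have main : ∀ (K : ℕ), ∃ m : ℕ, N < m ∧ (K:ℝ) + 1 ≤ (m:ℝ) - 2*N ∧
      ((2:ℝ)^m)⁻¹ < ((2:ℝ)^N)⁻¹ ∧ (0:ℝ) < ((2:ℝ)^m)⁻¹ := by
    intro K
    refine ⟨2*N + 1 + K, by omega, by push_cast; ring_nf; linarith, ?_, by positivity⟩
    apply inv_strictAnti₀ hpN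
    exact pow_lt_pow_right₀ one_lt_two (by omega)
  constructor
  · -- sup = ∞
    intro M
    obtain ⟨m, hNm, hK, hεN, hε⟩ := main ⌈|M|⌉₊
    set ε : ℝ := ((2:ℝ)^m)⁻¹
    have hMK : M < (m:ℝ) - 2*N := by
      have : |M| ≤ (⌈|M|⌉₊ : ℝ) := Nat.le_ceil _
      have hM : M ≤ |M| := le_abs_self M
      linarith [Nat.le_ceil |M|]
    have hmem_x : a + ε ∈ Set.Ioo u v := by
      constructor
      · linarith
      · linarith
    have hmem_y : a ∈ Set.Ioo u v := ⟨by linarith, by linarith⟩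
    refine ⟨a + ε, hmem_x, a, hmem_y, by linarith, ?_⟩
    rw [show a + ε - a = ε by ring, lt_div_iff₀ hε]
    have hkp := key_pos N m j hNm
    nlinarith [mul_lt_mul_of_pos_right hMK hε]
  · -- inf = -∞
    intro M
    obtain ⟨m, hNm, hK, hεN, hε⟩ := main ⌈|M|⌉₊
    set ε : ℝ := ((2:ℝ)^m)⁻¹
    have hMK : 2*(N:ℝ) - m < M := by
      have hM : -|M| ≤ M := neg_abs_le M
      linarith [Nat.le_ceil |M|]
    have hmem_x : a ∈ Set.Ioo u v := ⟨by linarith, by linarith⟩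
    have hmem_y : a - ε ∈ Set.Ioo u v := by
      constructor
      · linarith
      · linarith
    refine ⟨a, hmem_x, a - ε, hmem_y, by linarith, ?_⟩
    rw [show a - (a - ε) = ε by ring, div_lt_iff₀ hε]
    have hkn := key_neg N m j hNm
    nlinarith [mul_lt_mul_of_pos_right hMK hε]
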